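/- arXiv:2404.05965 — 6 statements merged into one kernel-verified Lean document; each statement's English description precedes it below -/
import Mathlib

section
/- Let n ≥ 5 and let p be a real number with 0 ≤ p < n−1. Define σ₁(p) = (n−p−1) − (p+1) and σ₂(p) = C(p+1,2) + C(n−p−1,2) − (p+1)(n−p−1) (elementary symmetric polynomials of −1 with multiplicity p+1 and +1 with multiplicity n−p−1, extended to real p via x(x−1)/2 for C(x,2)). Then σ₁(p) > 0 and σ₂(p) > 0 hold simultaneously if and only if p < (n − √n − 2)/2. -/
/-- Exact formula for `𝒫₂`: for `n ≥ 5` and `0 ≤ p < n-1`, the first and second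
elementary symmetric functions of `-1` (multiplicity `p+1`) and `+1`
(multiplicity `n-p-1`), extended to real `p`, are both positive iff
`p < (n - √n - 2)/2`. -/
theorem P2_formula (n : ℕ) (hn : 5 ≤ n) (p : ℝ) (hp0 : 0 ≤ p) (hp1 : p < (n : ℝ) - 1) :
    (0 < ((n : ℝ) - p - 1) - (p + 1) ∧
      0 < (p + 1) * p / 2 + ((n : ℝ) - p - 1) * ((n : ℝ) - p - 2) / 2
            - (p + 1) * ((n : ℝ) - p - 1))
      ↔ p < ((n : ℝ) - Real.sqrt n - 2) / 2 := by
  have hn0 : (0 : ℝ) ≤ (n : ℝ) := by positivity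
  have hs0 : 0 ≤ Real.sqrt n := Real.sqrt_nonneg _
  have hs : Real.sqrt n ^ 2 = (n : ℝ) := Real.sq_sqrt hn0
  constructor
  · rintro ⟨h1, h2⟩
    have hsq : Real.sqrt n ^ 2 < ((n : ℝ) - 2 * p - 2) ^ 2 := by
      rw [hs]; nlinarith
    have := abs_lt_of_sq_lt_sq hsq (by linarith : (0:ℝ) ≤ (n : ℝ) - 2 * p - 2)
    rw [abs_of_nonneg hs0] at this
    linarith
  · intro h
    have hlt : Real.sqrt n < (n : ℝ) - 2 * p - 2 := by linarith
    constructor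
    · linarith
    · nlinarith [sq_nonneg (Real.sqrt n), mul_self_nonneg ((n:ℝ) - 2*p - 2 - Real.sqrt n)]
end

section
/- Let n ≥ 5 and 0 < p < (n − √n − 2)/2, and define α₀ = (n−4)/4 − p(n−3)/(2(n−1)) − √(4p + 5p² − 5pn + pn² − p²n)/(2(n−1)). Then α₀ ∈ (0, (n−4)/4). -/
/-- The decay exponent `α₀` of the fast-decay ODE solution lies in `(0, (n-4)/4)`. -/
theorem alpha0_mem_Ioo (n : ℕ) (hn : 5 ≤ n) (p : ℝ) (hp0 : 0 < p)
    (hp1 : p < ((n : ℝ) - Real.sqrt n - 2) / 2) (α₀ : ℝ)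
    (hα : α₀ = ((n : ℝ) - 4) / 4 - p * ((n : ℝ) - 3) / (2 * ((n : ℝ) - 1))
        - Real.sqrt (4 * p + 5 * p ^ 2 - 5 * p * (n : ℝ) + p * (n : ℝ) ^ 2 - p ^ 2 * (n : ℝ))
            / (2 * ((n : ℝ) - 1))) :
    α₀ ∈ Set.Ioo 0 (((n : ℝ) - 4) / 4) := by
  set N : ℝ := (n : ℝ) with hNdef
  have hN : (5:ℝ) ≤ N := by rw [hNdef]; exact_mod_cast hn
  set s : ℝ := Real.sqrt N with hsdef
  have hs0 : 0 ≤ s := Real.sqrt_nonneg N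
  have hs : s ^ 2 = N := Real.sq_sqrt (by linarith)
  have hs2 : 2 < s := by nlinarith
  have h2 : (0:ℝ) < 2 * (N - 1) := by linarith
  have hApos : 0 < (N - 1) * (N - 4) / 2 - p * (N - 3) := by nlinarith
  have hA : Real.sqrt (4 * p + 5 * p ^ 2 - 5 * p * N + p * N ^ 2 - p ^ 2 * N)
      < (N - 1) * (N - 4) / 2 - p * (N - 3) := by
    rw [show (4 * p + 5 * p ^ 2 - 5 * p * N + p * N ^ 2 - p ^ 2 * N : ℝ)
        = 4 * p + 5 * p ^ 2 - 5 * p * N + p * N ^ 2 - p ^ 2 * N from rfl]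
    apply (Real.sqrt_lt' hApos).mpr
    nlinarith [mul_pos (mul_pos (show (0:ℝ) < (N-1)*(N-4) by nlinarith)
        (show (0:ℝ) < (N - s - 2)/2 - p by linarith))
        (show (0:ℝ) < (N + s - 2)/2 - p by linarith), hs]
  have hq0 : 0 ≤ Real.sqrt (4 * p + 5 * p ^ 2 - 5 * p * N + p * N ^ 2 - p ^ 2 * N) :=
    Real.sqrt_nonneg _
  constructor
  · rw [hα]
    have h5 : Real.sqrt (4 * p + 5 * p ^ 2 - 5 * p * N + p * N ^ 2 - p ^ 2 * N) / (2 * (N - 1))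
        < ((N - 1) * (N - 4) / 2 - p * (N - 3)) / (2 * (N - 1)) :=
      div_lt_div_of_pos_right hA h2
    have h4 : ((N - 1) * (N - 4) / 2 - p * (N - 3)) / (2 * (N - 1))
        = (N - 4) / 4 - p * (N - 3) / (2 * (N - 1)) := by
      have hN1 : N - 1 ≠ 0 := by linarith
      field_simp
      ring
    linarith
  · rw [hα]
    have h6 : 0 < p * (N - 3) / (2 * (N - 1)) :=
      div_pos (mul_pos hp0 (by linarith)) h2
    have h7 : 0 ≤ Real.sqrt (4 * p + 5 * p ^ 2 - 5 * p * N + p * N ^ 2 - p ^ 2 * N)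
        / (2 * (N - 1)) := div_nonneg hq0 (le_of_lt h2)
    linarith
end

section
/- Let n ≥ 5 and 0 < p < (n − √n − 2)/2, and let α₀ be as in the indicial root formula α₀ = (n−4)/4 − p(n−3)/(2(n−1)) − √(4p + 5p² − 5pn + pn² − p²n)/(2(n−1)). Then −(n−4)/4 + p(n−3)/(n−1) + 1 + α₀ > 0. -/
/-- Positivity of the indicial root `χ_{1,+}^{(∞)}`:
`-(n-4)/4 + p(n-3)/(n-1) + 1 + α₀ > 0`. -/
theorem chi_one_plus_pos (n : ℕ) (hn : 5 ≤ n) (p : ℝ) (hp0 : 0 < p)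
    (hp1 : p < ((n : ℝ) - Real.sqrt n - 2) / 2) (α₀ : ℝ)
    (hα : α₀ = ((n : ℝ) - 4) / 4 - p * ((n : ℝ) - 3) / (2 * ((n : ℝ) - 1))
        - Real.sqrt (4 * p + 5 * p ^ 2 - 5 * p * (n : ℝ) + p * (n : ℝ) ^ 2 - p ^ 2 * (n : ℝ))
            / (2 * ((n : ℝ) - 1))) :
    0 < -(((n : ℝ) - 4) / 4) + p * ((n : ℝ) - 3) / ((n : ℝ) - 1) + 1 + α₀ := by
  have hn5 : (5:ℝ) ≤ (n:ℝ) := by exact_mod_cast hn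
  have h1 : (0:ℝ) < (n:ℝ) - 1 := by linarith
  have hpos : 0 < 2 * ((n:ℝ) - 1) + p * ((n:ℝ) - 3) := by nlinarith
  have hD : 4 * p + 5 * p ^ 2 - 5 * p * (n : ℝ) + p * (n : ℝ) ^ 2 - p ^ 2 * (n : ℝ)
      < (2 * ((n:ℝ) - 1) + p * ((n:ℝ) - 3)) ^ 2 := by
    nlinarith [mul_pos (mul_pos hp0 h1) (show (0:ℝ) < 3*(n:ℝ) - 8 by linarith),
      mul_nonneg (sq_nonneg p) (show (0:ℝ) ≤ ((n:ℝ)-3)^2 + ((n:ℝ)-5) by nlinarith),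
      sq_nonneg ((n:ℝ) - 1)]
  set s := Real.sqrt (4 * p + 5 * p ^ 2 - 5 * p * (n : ℝ) + p * (n : ℝ) ^ 2 - p ^ 2 * (n : ℝ))
    with hsdef
  have hs : s < 2 * ((n:ℝ) - 1) + p * ((n:ℝ) - 3) := by
    rw [hsdef]
    exact (Real.sqrt_lt' hpos).mpr hD
  have key : 0 < (p * ((n:ℝ) - 3) + 2 * ((n:ℝ) - 1) - s) / (2 * ((n:ℝ) - 1)) :=
    div_pos (by linarith) (by linarith)
  have heq : -(((n : ℝ) - 4) / 4) + p * ((n : ℝ) - 3) / ((n : ℝ) - 1) + 1 + α₀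
      = (p * ((n:ℝ) - 3) + 2 * ((n:ℝ) - 1) - s) / (2 * ((n:ℝ) - 1)) := by
    rw [hα]
    field_simp
    ring
  rw [heq]
  exact key
end

section
/- Let δ_j > 0 and δ be real numbers with −δ_j < δ < δ_j. Let ω ∈ C²(ℝ) be compactly supported in (0, ∞), and let ψ = ω'' − δ_j²ω. Then ∫₀^∞ ω² e^{2δτ} dτ ≤ (δ_j² − δ²)^{−2} ∫₀^∞ ψ² e^{2δτ} dτ. -/
open MeasureTheory

/-- Weighted `L²` a priori estimate for the model operator `𝔎_j ω = ω'' - δ_j² ω`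
for functions compactly supported in `(0, ∞)`, with weight `e^{2δτ}`,
when `-δ_j < δ < δ_j`. -/
theorem weighted_estimate_model (δj δ : ℝ) (hδj : 0 < δj) (h₁ : -δj < δ) (h₂ : δ < δj)
    (ω : ℝ → ℝ) (hω : ContDiff ℝ 2 ω) (hcpt : HasCompactSupport ω)
    (hsupp : Function.support ω ⊆ Set.Ioi 0)
    (ψ : ℝ → ℝ) (hψ : ∀ τ, ψ τ = deriv (deriv ω) τ - δj ^ 2 * ω τ) :
    ∫ τ in Set.Ioi (0 : ℝ), (ω τ) ^ 2 * Real.exp (2 * δ * τ)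
      ≤ ((δj ^ 2 - δ ^ 2) ^ 2)⁻¹ * ∫ τ in Set.Ioi (0 : ℝ), (ψ τ) ^ 2 * Real.exp (2 * δ * τ) := by
  set c : ℝ := δj ^ 2 - δ ^ 2 with hc_def
  have hc : 0 < c := by nlinarith
  set E : ℝ → ℝ := fun τ => Real.exp (δ * τ) with hE_def
  have hEc : Continuous E := by fun_prop
  have hE : ∀ τ, HasDerivAt E (δ * E τ) τ := by
    intro τ
    simpa [mul_comm] using (((hasDerivAt_id τ).const_mul δ).exp)
  -- smoothness of derivatives of ω
  have hω' : ContDiff ℝ 1 (deriv ω) := by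
    have h2 : (2 : WithTop ℕ∞) = 1 + 1 := by norm_num
    exact (contDiff_succ_iff_deriv.mp (h2 ▸ hω)).2.2
  have hω1 : ∀ τ, HasDerivAt ω (deriv ω τ) τ :=
    fun τ => (hω.differentiable (by norm_num) τ).hasDerivAt
  have hω2 : ∀ τ, HasDerivAt (deriv ω) (deriv (deriv ω) τ) τ :=
    fun τ => (hω'.differentiable (by norm_num) τ).hasDerivAt
  have hω'' : Continuous (deriv (deriv ω)) :=
    (contDiff_one_iff_deriv.mp hω').2
  -- v = ω * E and its derivatives
  set v : ℝ → ℝ := fun τ => ω τ * E τ with hv_def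
  set w : ℝ → ℝ := fun τ => (deriv ω τ + δ * ω τ) * E τ with hw_def
  set z : ℝ → ℝ := fun τ =>
    (deriv (deriv ω) τ + 2 * δ * deriv ω τ + δ ^ 2 * ω τ) * E τ with hz_def
  have hv' : ∀ τ, HasDerivAt v (w τ) τ := by
    intro τ
    have := (hω1 τ).mul (hE τ)
    refine this.congr_deriv ?_
    simp [hw_def]; ring
  have hw' : ∀ τ, HasDerivAt w (z τ) τ := by
    intro τ
    have := ((hω2 τ).add ((hω1 τ).const_mul δ)).mul (hE τ)
    refine this.congr_deriv ?_
    simp [hz_def]; ring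
  -- continuity and compact support
  have hωc : Continuous ω := hω.continuous
  have hω'c : Continuous (deriv ω) := hω'.continuous
  have hvc : Continuous v := hωc.mul hEc
  have hwc : Continuous w := (hω'c.add (continuous_const.mul hωc)).mul hEc
  have hzc : Continuous z := by fun_prop
  have hψc : Continuous ψ := by
    have : ψ = fun τ => deriv (deriv ω) τ - δj ^ 2 * ω τ := funext hψ
    rw [this]; fun_prop
  have hcpt' : HasCompactSupport (deriv ω) := hcpt.deriv
  have hcpt'' : HasCompactSupport (deriv (deriv ω)) := hcpt'.deriv
  have hvK : HasCompactSupport v := hcpt.mul_right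
  have hwK : HasCompactSupport w := by
    apply HasCompactSupport.mul_right
    exact hcpt'.add (hcpt.mul_left)
  have hzK : HasCompactSupport z := by
    apply HasCompactSupport.mul_right
    exact (hcpt''.add (hcpt'.mul_left)).add (hcpt.mul_left)
  have hψK : HasCompactSupport ψ :=
    HasCompactSupport.intro (hcpt''.union hcpt) (fun x hx => by
      rw [hψ x, image_eq_zero_of_notMem_tsupport (fun h => hx (Set.mem_union_left _ h)),
        image_eq_zero_of_notMem_tsupport (fun h => hx (Set.mem_union_right _ h))]
      ring)
  -- integrability
  have int_vv : Integrable (fun τ => v τ * v τ) :=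
    ((hvc.mul hvc).integrable_of_hasCompactSupport (hvK.mul_right))
  have int_vw : Integrable (fun τ => v τ * w τ) :=
    ((hvc.mul hwc).integrable_of_hasCompactSupport (hvK.mul_right))
  have int_wv : Integrable (fun τ => w τ * v τ) :=
    ((hwc.mul hvc).integrable_of_hasCompactSupport (hwK.mul_right))
  have int_ww : Integrable (fun τ => w τ * w τ) :=
    ((hwc.mul hwc).integrable_of_hasCompactSupport (hwK.mul_right))
  have int_zv : Integrable (fun τ => z τ * v τ) :=
    ((hzc.mul hvc).integrable_of_hasCompactSupport (hzK.mul_right))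
  have int_gv : Integrable (fun τ => (ψ τ * E τ) * v τ) :=
    (((hψc.mul hEc).mul hvc).integrable_of_hasCompactSupport
      ((hψK.mul_right).mul_right))
  have int_gg : Integrable (fun τ => (ψ τ * E τ) * (ψ τ * E τ)) :=
    (((hψc.mul hEc).mul (hψc.mul hEc)).integrable_of_hasCompactSupport
      ((hψK.mul_right).mul_right))
  -- integration by parts: ∫ v w = 0
  have ibp1 : ∫ τ, v τ * w τ = 0 := by
    have h := integral_mul_deriv_eq_deriv_mul_of_integrable
      (u := v) (u' := w) (v := v) (v' := w) (fun τ _ => hv' τ) (fun τ _ => hv' τ) int_vw int_wv int_vv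
    have h2 : ∫ τ, w τ * v τ = ∫ τ, v τ * w τ := by
      congr 1; funext τ; ring
    rw [h2] at h; linarith
  -- integration by parts: ∫ w w = -∫ z v
  have ibp2 : ∫ τ, w τ * w τ = - ∫ τ, z τ * v τ :=
    integral_mul_deriv_eq_deriv_mul_of_integrable
      (u := w) (u' := z) (v := v) (v' := w) (fun τ _ => hw' τ) (fun τ _ => hv' τ) int_ww int_zv int_wv
  -- the key identity: ψ E = z - 2δ w - c v pointwise
  have key : ∀ τ, (ψ τ * E τ) * v τ = z τ * v τ - 2 * δ * (v τ * w τ) - c * (v τ * v τ) := by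
    intro τ
    rw [hψ τ]
    simp only [hz_def, hw_def, hv_def, hc_def]
    ring
  clear_value c
  have key_int : ∫ τ, (ψ τ * E τ) * v τ = - (∫ τ, w τ * w τ) - c * ∫ τ, v τ * v τ := by
    have h0 : (fun τ => (ψ τ * E τ) * v τ)
        = fun τ => z τ * v τ - 2 * δ * (v τ * w τ) - c * (v τ * v τ) := funext key
    have intA : Integrable (fun τ => z τ * v τ - 2 * δ * (v τ * w τ)) := by
      exact int_zv.sub (int_vw.const_mul (2 * δ))
    rw [h0, integral_sub intA (int_vv.const_mul c),
      integral_sub int_zv (int_vw.const_mul (2 * δ)), integral_const_mul, integral_const_mul,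
      ibp1, ibp2]
    ring
  -- hence c ∫ v² ≤ - ∫ ψE v
  have hww_nonneg : 0 ≤ ∫ τ, w τ * w τ :=
    integral_nonneg fun τ => mul_self_nonneg _
  have step1 : c * ∫ τ, v τ * v τ ≤ - ∫ τ, (ψ τ * E τ) * v τ := by
    rw [key_int]; linarith
  -- pointwise Young inequality
  have young : ∀ τ, -((ψ τ * E τ) * v τ)
      ≤ (ψ τ * E τ) * (ψ τ * E τ) / (2 * c) + (c / 2) * (v τ * v τ) := by
    intro τ
    have h := sq_nonneg ((ψ τ * E τ) + c * v τ)
    rw [div_add' _ _ _ (by positivity), le_div_iff₀ (by positivity)]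
    nlinarith [h, hc]
  have step2 : - ∫ τ, (ψ τ * E τ) * v τ
      ≤ (∫ τ, (ψ τ * E τ) * (ψ τ * E τ)) / (2 * c) + (c / 2) * ∫ τ, v τ * v τ := by
    rw [← integral_neg]
    calc ∫ τ, -((ψ τ * E τ) * v τ)
        ≤ ∫ τ, ((ψ τ * E τ) * (ψ τ * E τ) / (2 * c) + (c / 2) * (v τ * v τ)) := by
          apply integral_mono int_gv.neg
            ((int_gg.div_const _).add (int_vv.const_mul _)) young
      _ = (∫ τ, (ψ τ * E τ) * (ψ τ * E τ)) / (2 * c) + (c / 2) * ∫ τ, v τ * v τ := by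
          rw [integral_add (int_gg.div_const _) (int_vv.const_mul _),
            integral_div, integral_const_mul]
  have main : ∫ τ, v τ * v τ ≤ (c ^ 2)⁻¹ * ∫ τ, (ψ τ * E τ) * (ψ τ * E τ) := by
    have h := step1.trans step2
    rw [inv_mul_eq_div, le_div_iff₀ (by positivity)]
    have hc2 : (0:ℝ) < 2 * c := by positivity
    rw [div_add' _ _ _ (ne_of_gt hc2)] at h
    rw [le_div_iff₀ hc2] at h
    nlinarith [h, hc]
  -- convert set integrals to integrals over ℝ
  have hω0 : ∀ τ : ℝ, τ ∉ Set.Ioi (0:ℝ) → ω τ = 0 := by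
    intro τ hτ
    by_contra h
    exact hτ (hsupp h)
  have hψ0 : ∀ τ : ℝ, τ < 0 → ψ τ = 0 := by
    intro τ hτ
    have hev : ω =ᶠ[nhds τ] (fun _ => (0:ℝ)) := by
      filter_upwards [Iio_mem_nhds hτ] with x hx
      exact hω0 x (by simp at hx ⊢; linarith)
    have hd1 : deriv ω =ᶠ[nhds τ] (fun _ => (0:ℝ)) := by
      have : Set.EqOn (deriv ω) (fun _ => (0:ℝ)) (Set.Iio 0) := by
        intro x hx
        have hev' : ω =ᶠ[nhds x] (fun _ => (0:ℝ)) := by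
          filter_upwards [Iio_mem_nhds hx] with y hy
          exact hω0 y (by simp at hy ⊢; linarith)
        rw [hev'.deriv_eq, deriv_const]
      filter_upwards [Iio_mem_nhds hτ] with x hx
      exact this hx
    have hd2 : deriv (deriv ω) τ = 0 := by
      rw [hd1.deriv_eq, deriv_const]
    rw [hψ τ, hd2, hω0 τ (by simp; linarith)]
    ring
  have hEsq : ∀ τ : ℝ, E τ * E τ = Real.exp (2 * δ * τ) := by
    intro τ
    rw [hE_def, ← Real.exp_add]
    ring_nf
  have set1 : ∫ τ in Set.Ioi (0:ℝ), (ω τ) ^ 2 * Real.exp (2 * δ * τ) = ∫ τ, v τ * v τ := by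
    rw [setIntegral_eq_integral_of_forall_compl_eq_zero
      (fun τ hτ => by rw [hω0 τ hτ]; ring)]
    congr 1; funext τ
    rw [hv_def]
    simp only
    rw [← hEsq τ]; ring
  have ae0 : ∀ᵐ τ : ℝ, τ ≠ 0 := by
    rw [ae_iff]
    simp [Real.volume_singleton]
  have set2 : ∫ τ in Set.Ioi (0:ℝ), (ψ τ) ^ 2 * Real.exp (2 * δ * τ)
      = ∫ τ, (ψ τ * E τ) * (ψ τ * E τ) := by
    rw [setIntegral_eq_integral_of_ae_compl_eq_zero ?_]
    · congr 1; funext τ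
      rw [← hEsq τ]; ring
    · filter_upwards [ae0] with τ hτ0 hτ
      have : τ < 0 := lt_of_le_of_ne (by simpa using hτ) hτ0
      rw [hψ0 τ this]; ring
  rw [set1, set2]
  exact main
end

section
/- Let δ > 0 and δ_j > 0 with 0 < δ < δ_j. Let ω ∈ C²(ℝ) be compactly supported in (τ₀, ∞) for some τ₀ ∈ ℝ, and let ψ = ω'' − δ_j²ω − e^{−2τ}ω. Then ∫ ω² e^{2δτ} dτ ≤ C ∫ ψ² e^{2δτ} dτ with a constant C depending only on δ and δ_j (independent of τ₀ and ω). -/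
open MeasureTheory

/-- The integral of the derivative of a compactly supported `C¹` function vanishes. -/
lemma integral_deriv_eq_zero_of_compact_support {f : ℝ → ℝ} (hf : ContDiff ℝ 1 f)
    (h2f : HasCompactSupport f) : ∫ x, deriv f x = 0 := by
  have hc : Continuous (deriv f) := hf.continuous_deriv le_rfl
  have hint : Integrable (deriv f) := hc.integrable_of_hasCompactSupport h2f.deriv
  have h := intervalIntegral.integral_Iic_add_Ioi (b := 0) hint.integrableOn hint.integrableOn
  rw [h2f.integral_Iic_deriv_eq hf 0, h2f.integral_Ioi_deriv_eq hf 0] at h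
  linarith

/-- Uniform weighted `L²` a priori estimate for the Bessel-type operator
`K_j ω = ω'' - δ_j² ω - e^{-2τ} ω`: for `0 < δ < δ_j` the constant is
independent of the support parameter `τ₀`. -/
theorem weighted_estimate_bessel (δ δj : ℝ) (hδ : 0 < δ) (hδδj : δ < δj) :
    ∃ C : ℝ, 0 < C ∧
      ∀ (τ₀ : ℝ) (ω : ℝ → ℝ), ContDiff ℝ 2 ω → HasCompactSupport ω →
        Function.support ω ⊆ Set.Ioi τ₀ →
        ∀ ψ : ℝ → ℝ,
          (∀ τ, ψ τ = deriv (deriv ω) τ - δj ^ 2 * ω τ - Real.exp (-2 * τ) * ω τ) →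
          ∫ τ, (ω τ) ^ 2 * Real.exp (2 * δ * τ)
            ≤ C * ∫ τ, (ψ τ) ^ 2 * Real.exp (2 * δ * τ) := by
  have hε : 0 < δj ^ 2 - δ ^ 2 := by nlinarith
  refine ⟨1 / (δj ^ 2 - δ ^ 2) ^ 2, by positivity, ?_⟩
  intro τ₀ ω hω2 hcs hsupp ψ hψ
  set ε : ℝ := δj ^ 2 - δ ^ 2 with hεdef
  -- basic regularity facts
  have hωc : Continuous ω := hω2.continuous
  have hdiff : Differentiable ℝ ω := hω2.differentiable (by norm_num)
  have hω2' : ContDiff ℝ (1 + 1) ω := by exact_mod_cast hω2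
  have hω'1 : ContDiff ℝ 1 (deriv ω) := (contDiff_succ_iff_deriv.mp hω2').2.2
  have hω1 : ContDiff ℝ 1 ω := hω2.of_le (by norm_num)
  have hω'c : Continuous (deriv ω) := hω'1.continuous
  have hdiff' : Differentiable ℝ (deriv ω) := hω'1.differentiable (by norm_num)
  have hω''c : Continuous (deriv (deriv ω)) := hω'1.continuous_deriv le_rfl
  have hcs' : HasCompactSupport (deriv ω) := hcs.deriv
  have hcs'' : HasCompactSupport (deriv (deriv ω)) := hcs'.deriv
  have hE1 : ContDiff ℝ 1 (fun τ : ℝ => Real.exp (2 * δ * τ)) :=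
    (Real.contDiff_exp.comp (contDiff_const.mul contDiff_id)).of_le le_top
  have hEc : Continuous (fun τ : ℝ => Real.exp (2 * δ * τ)) := hE1.continuous
  have hdE : ∀ τ : ℝ, HasDerivAt (fun τ : ℝ => Real.exp (2 * δ * τ))
      (2 * δ * Real.exp (2 * δ * τ)) τ := by
    intro τ
    have h1 : HasDerivAt (fun τ : ℝ => 2 * δ * τ) (2 * δ) τ := by
      simpa using (hasDerivAt_id τ).const_mul (2 * δ)
    simpa [mul_comm] using h1.exp
  have hdω : ∀ τ, HasDerivAt ω (deriv ω τ) τ := fun τ => (hdiff τ).hasDerivAt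
  have hdω' : ∀ τ, HasDerivAt (deriv ω) (deriv (deriv ω) τ) τ := fun τ => (hdiff' τ).hasDerivAt
  -- ψ regularity
  have hψeq : ψ = fun τ => deriv (deriv ω) τ - δj ^ 2 * ω τ - Real.exp (-2 * τ) * ω τ :=
    funext hψ
  have hψc : Continuous ψ := by
    rw [hψeq]; fun_prop
  have hψcs : HasCompactSupport ψ := by
    rw [hψeq]
    have h1 : HasCompactSupport (fun τ => δj ^ 2 * ω τ) := hcs.mul_left
    have h2 : HasCompactSupport (fun τ => Real.exp (-2 * τ) * ω τ) := hcs.mul_left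
    simpa [sub_eq_add_neg, Pi.add_def, Pi.neg_def] using (hcs''.add h1.neg).add h2.neg
  -- integrability of all the integrands
  have hAi : Integrable (fun τ => ω τ * ω τ * Real.exp (2 * δ * τ)) :=
    (by fun_prop : Continuous _).integrable_of_hasCompactSupport ((hcs.mul_left).mul_right)
  have hBi : Integrable (fun τ => deriv ω τ * ω τ * Real.exp (2 * δ * τ)) :=
    (by fun_prop : Continuous _).integrable_of_hasCompactSupport ((hcs.mul_left).mul_right)
  have hCi : Integrable (fun τ => deriv ω τ * deriv ω τ * Real.exp (2 * δ * τ)) :=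
    (by fun_prop : Continuous _).integrable_of_hasCompactSupport ((hcs'.mul_left).mul_right)
  have hDi : Integrable (fun τ => deriv (deriv ω) τ * ω τ * Real.exp (2 * δ * τ)) :=
    (by fun_prop : Continuous _).integrable_of_hasCompactSupport ((hcs.mul_left).mul_right)
  have hXi : Integrable (fun τ => Real.exp (-2 * τ) * ω τ * ω τ * Real.exp (2 * δ * τ)) :=
    (by fun_prop : Continuous _).integrable_of_hasCompactSupport
      (((hcs.mul_left).mul_right).mul_right)
  have hPi : Integrable (fun τ => ψ τ * ω τ * Real.exp (2 * δ * τ)) :=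
    ((hψc.mul hωc).mul hEc).integrable_of_hasCompactSupport ((hψcs.mul_right).mul_right)
  have hQi : Integrable (fun τ => ψ τ * ψ τ * Real.exp (2 * δ * τ)) :=
    ((hψc.mul hψc).mul hEc).integrable_of_hasCompactSupport ((hψcs.mul_right).mul_right)
  -- abbreviations
  set IA : ℝ := ∫ τ, ω τ * ω τ * Real.exp (2 * δ * τ) with hIA
  set IB : ℝ := ∫ τ, deriv ω τ * ω τ * Real.exp (2 * δ * τ) with hIB
  set IC : ℝ := ∫ τ, deriv ω τ * deriv ω τ * Real.exp (2 * δ * τ) with hIC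
  set ID : ℝ := ∫ τ, deriv (deriv ω) τ * ω τ * Real.exp (2 * δ * τ) with hID
  set IX : ℝ := ∫ τ, Real.exp (-2 * τ) * ω τ * ω τ * Real.exp (2 * δ * τ) with hIX
  set IP : ℝ := ∫ τ, ψ τ * ω τ * Real.exp (2 * δ * τ) with hIP
  set IQ : ℝ := ∫ τ, ψ τ * ψ τ * Real.exp (2 * δ * τ) with hIQ
  -- first integration by parts: IB = -δ * IA
  have ibp1 : IB = -δ * IA := by
    have hF : ContDiff ℝ 1 (fun τ => ω τ * ω τ * Real.exp (2 * δ * τ)) :=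
      (hω1.mul hω1).mul hE1
    have hFs : HasCompactSupport (fun τ => ω τ * ω τ * Real.exp (2 * δ * τ)) :=
      (hcs.mul_left).mul_right
    have hderiv : deriv (fun τ => ω τ * ω τ * Real.exp (2 * δ * τ)) =
        fun τ => 2 * (deriv ω τ * ω τ * Real.exp (2 * δ * τ))
          + 2 * δ * (ω τ * ω τ * Real.exp (2 * δ * τ)) := by
      funext τ
      rw [(((hdω τ).fun_mul (hdω τ)).fun_mul (hdE τ)).deriv]
      ring
    have h0 : (∫ τ, (2 * (deriv ω τ * ω τ * Real.exp (2 * δ * τ))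
        + 2 * δ * (ω τ * ω τ * Real.exp (2 * δ * τ)))) = 0 := by
      rw [← hderiv]
      exact integral_deriv_eq_zero_of_compact_support hF hFs
    have s1 : (∫ τ, (2 * (deriv ω τ * ω τ * Real.exp (2 * δ * τ))
          + 2 * δ * (ω τ * ω τ * Real.exp (2 * δ * τ))))
        = (∫ τ, 2 * (deriv ω τ * ω τ * Real.exp (2 * δ * τ)))
          + ∫ τ, 2 * δ * (ω τ * ω τ * Real.exp (2 * δ * τ)) :=
      integral_add (hBi.const_mul 2) (hAi.const_mul (2 * δ))
    have s2 : (∫ τ, 2 * (deriv ω τ * ω τ * Real.exp (2 * δ * τ))) = 2 * IB :=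
      integral_const_mul 2 _
    have s3 : (∫ τ, 2 * δ * (ω τ * ω τ * Real.exp (2 * δ * τ))) = 2 * δ * IA :=
      integral_const_mul (2 * δ) _
    rw [s1, s2, s3] at h0
    linarith
  -- second integration by parts: ID = -IC - 2δ IB
  have ibp2 : ID = -IC - 2 * δ * IB := by
    have hF : ContDiff ℝ 1 (fun τ => deriv ω τ * ω τ * Real.exp (2 * δ * τ)) :=
      (hω'1.mul hω1).mul hE1
    have hFs : HasCompactSupport (fun τ => deriv ω τ * ω τ * Real.exp (2 * δ * τ)) :=
      (hcs.mul_left).mul_right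
    have hderiv : deriv (fun τ => deriv ω τ * ω τ * Real.exp (2 * δ * τ)) =
        fun τ => (deriv (deriv ω) τ * ω τ * Real.exp (2 * δ * τ)
            + deriv ω τ * deriv ω τ * Real.exp (2 * δ * τ))
          + 2 * δ * (deriv ω τ * ω τ * Real.exp (2 * δ * τ)) := by
      funext τ
      rw [(((hdω' τ).fun_mul (hdω τ)).fun_mul (hdE τ)).deriv]
      ring
    have h0 : (∫ τ, ((deriv (deriv ω) τ * ω τ * Real.exp (2 * δ * τ)
          + deriv ω τ * deriv ω τ * Real.exp (2 * δ * τ))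
        + 2 * δ * (deriv ω τ * ω τ * Real.exp (2 * δ * τ)))) = 0 := by
      rw [← hderiv]
      exact integral_deriv_eq_zero_of_compact_support hF hFs
    have s1 : (∫ τ, ((deriv (deriv ω) τ * ω τ * Real.exp (2 * δ * τ)
            + deriv ω τ * deriv ω τ * Real.exp (2 * δ * τ))
          + 2 * δ * (deriv ω τ * ω τ * Real.exp (2 * δ * τ))))
        = (∫ τ, (deriv (deriv ω) τ * ω τ * Real.exp (2 * δ * τ)
            + deriv ω τ * deriv ω τ * Real.exp (2 * δ * τ)))
          + ∫ τ, 2 * δ * (deriv ω τ * ω τ * Real.exp (2 * δ * τ)) :=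
      integral_add (hDi.add hCi) (hBi.const_mul (2 * δ))
    have s2 : (∫ τ, (deriv (deriv ω) τ * ω τ * Real.exp (2 * δ * τ)
        + deriv ω τ * deriv ω τ * Real.exp (2 * δ * τ))) = ID + IC :=
      integral_add hDi hCi
    have s3 : (∫ τ, 2 * δ * (deriv ω τ * ω τ * Real.exp (2 * δ * τ))) = 2 * δ * IB :=
      integral_const_mul (2 * δ) _
    rw [s1, s2, s3] at h0
    linarith
  -- Poincaré-type positivity: δ² IA ≤ IC
  have hpoin : δ ^ 2 * IA ≤ IC := by
    have h0 : 0 ≤ ∫ τ, (deriv ω τ + δ * ω τ) ^ 2 * Real.exp (2 * δ * τ) :=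
      integral_nonneg fun τ => by positivity
    have hexp : (fun τ => (deriv ω τ + δ * ω τ) ^ 2 * Real.exp (2 * δ * τ)) =
        fun τ => (deriv ω τ * deriv ω τ * Real.exp (2 * δ * τ)
            + 2 * δ * (deriv ω τ * ω τ * Real.exp (2 * δ * τ)))
          + δ ^ 2 * (ω τ * ω τ * Real.exp (2 * δ * τ)) := by
      funext τ; ring
    rw [hexp] at h0
    have s1 : (∫ τ, ((deriv ω τ * deriv ω τ * Real.exp (2 * δ * τ)
            + 2 * δ * (deriv ω τ * ω τ * Real.exp (2 * δ * τ)))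
          + δ ^ 2 * (ω τ * ω τ * Real.exp (2 * δ * τ))))
        = (∫ τ, (deriv ω τ * deriv ω τ * Real.exp (2 * δ * τ)
            + 2 * δ * (deriv ω τ * ω τ * Real.exp (2 * δ * τ))))
          + ∫ τ, δ ^ 2 * (ω τ * ω τ * Real.exp (2 * δ * τ)) :=
      integral_add (hCi.add (hBi.const_mul (2 * δ))) (hAi.const_mul (δ ^ 2))
    have s2 : (∫ τ, (deriv ω τ * deriv ω τ * Real.exp (2 * δ * τ)
          + 2 * δ * (deriv ω τ * ω τ * Real.exp (2 * δ * τ))))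
        = IC + ∫ τ, 2 * δ * (deriv ω τ * ω τ * Real.exp (2 * δ * τ)) :=
      integral_add hCi (hBi.const_mul (2 * δ))
    have s3 : (∫ τ, 2 * δ * (deriv ω τ * ω τ * Real.exp (2 * δ * τ))) = 2 * δ * IB :=
      integral_const_mul (2 * δ) _
    have s4 : (∫ τ, δ ^ 2 * (ω τ * ω τ * Real.exp (2 * δ * τ))) = δ ^ 2 * IA :=
      integral_const_mul (δ ^ 2) _
    rw [s1, s2, s3, s4] at h0
    nlinarith [ibp1]
  -- the extra exponential term is nonnegative
  have hXpos : 0 ≤ IX := integral_nonneg fun τ => by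
    show (0:ℝ) ≤ Real.exp (-2 * τ) * ω τ * ω τ * Real.exp (2 * δ * τ)
    have := mul_nonneg (mul_pos (Real.exp_pos (-2 * τ)) (Real.exp_pos (2 * δ * τ))).le
      (sq_nonneg (ω τ))
    nlinarith [this]
  -- energy identity: IP = ID - δj² IA - IX
  have henergy : IP = ID - δj ^ 2 * IA - IX := by
    have hexp : (fun τ => ψ τ * ω τ * Real.exp (2 * δ * τ)) =
        fun τ => (deriv (deriv ω) τ * ω τ * Real.exp (2 * δ * τ)
            - δj ^ 2 * (ω τ * ω τ * Real.exp (2 * δ * τ)))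
          - Real.exp (-2 * τ) * ω τ * ω τ * Real.exp (2 * δ * τ) := by
      funext τ; rw [hψ τ]; ring
    have h4 : IP = ∫ τ, ((deriv (deriv ω) τ * ω τ * Real.exp (2 * δ * τ)
            - δj ^ 2 * (ω τ * ω τ * Real.exp (2 * δ * τ)))
          - Real.exp (-2 * τ) * ω τ * ω τ * Real.exp (2 * δ * τ)) := by
      rw [hIP]; exact congrArg (MeasureTheory.integral volume) hexp
    have h1 : (∫ τ, ((deriv (deriv ω) τ * ω τ * Real.exp (2 * δ * τ)
            - δj ^ 2 * (ω τ * ω τ * Real.exp (2 * δ * τ)))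
          - Real.exp (-2 * τ) * ω τ * ω τ * Real.exp (2 * δ * τ)))
        = (∫ τ, (deriv (deriv ω) τ * ω τ * Real.exp (2 * δ * τ)
            - δj ^ 2 * (ω τ * ω τ * Real.exp (2 * δ * τ)))) - IX :=
      integral_sub (hDi.sub (hAi.const_mul (δj ^ 2))) hXi
    have h2 : (∫ τ, (deriv (deriv ω) τ * ω τ * Real.exp (2 * δ * τ)
          - δj ^ 2 * (ω τ * ω τ * Real.exp (2 * δ * τ))))
        = ID - ∫ τ, δj ^ 2 * (ω τ * ω τ * Real.exp (2 * δ * τ)) :=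
      integral_sub hDi (hAi.const_mul (δj ^ 2))
    have h3 : (∫ τ, δj ^ 2 * (ω τ * ω τ * Real.exp (2 * δ * τ))) = δj ^ 2 * IA :=
      integral_const_mul (δj ^ 2) _
    rw [h4, h1, h2, h3]
  -- hence ε IA ≤ -IP
  have hmain1 : ε * IA ≤ -IP := by
    rw [henergy, ibp2, ibp1, hεdef]
    nlinarith [hpoin, hXpos]
  -- Young's inequality step: -2ε IP ≤ IQ + ε² IA
  have hmain2 : -(2 * ε) * IP ≤ IQ + ε ^ 2 * IA := by
    have hpt : ∀ τ, -(2 * ε) * (ψ τ * ω τ * Real.exp (2 * δ * τ)) ≤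
        ψ τ * ψ τ * Real.exp (2 * δ * τ) + ε ^ 2 * (ω τ * ω τ * Real.exp (2 * δ * τ)) := by
      intro τ
      nlinarith [mul_nonneg (sq_nonneg (ψ τ + ε * ω τ)) (Real.exp_pos (2 * δ * τ)).le]
    have h : (∫ τ, -(2 * ε) * (ψ τ * ω τ * Real.exp (2 * δ * τ)))
        ≤ ∫ τ, (ψ τ * ψ τ * Real.exp (2 * δ * τ)
            + ε ^ 2 * (ω τ * ω τ * Real.exp (2 * δ * τ))) :=
      integral_mono (hPi.const_mul (-(2 * ε))) (hQi.add (hAi.const_mul (ε ^ 2))) hpt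
    have hL : (∫ τ, -(2 * ε) * (ψ τ * ω τ * Real.exp (2 * δ * τ))) = -(2 * ε) * IP :=
      integral_const_mul (-(2 * ε)) _
    have hR1 : (∫ τ, (ψ τ * ψ τ * Real.exp (2 * δ * τ)
          + ε ^ 2 * (ω τ * ω τ * Real.exp (2 * δ * τ))))
        = IQ + ∫ τ, ε ^ 2 * (ω τ * ω τ * Real.exp (2 * δ * τ)) :=
      integral_add hQi (hAi.const_mul (ε ^ 2))
    have hR2 : (∫ τ, ε ^ 2 * (ω τ * ω τ * Real.exp (2 * δ * τ))) = ε ^ 2 * IA :=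
      integral_const_mul (ε ^ 2) _
    rw [hL, hR1, hR2] at h
    exact h
  -- combine: ε² IA ≤ IQ
  have hfinal : ε ^ 2 * IA ≤ IQ := by nlinarith [hmain1, hmain2, hε]
  -- rewrite the goal in terms of IA and IQ
  have hgA : (fun τ => (ω τ) ^ 2 * Real.exp (2 * δ * τ)) =
      fun τ => ω τ * ω τ * Real.exp (2 * δ * τ) := by funext τ; ring
  have hgQ : (fun τ => (ψ τ) ^ 2 * Real.exp (2 * δ * τ)) =
      fun τ => ψ τ * ψ τ * Real.exp (2 * δ * τ) := by funext τ; ring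
  rw [hgA, hgQ, ← hIA, ← hIQ]
  calc IA = 1 / ε ^ 2 * (ε ^ 2 * IA) := by
        field_simp
    _ ≤ 1 / ε ^ 2 * IQ := by
        apply mul_le_mul_of_nonneg_left hfinal; positivity
end

section
/- Let n ≥ 5 and 0 < p < (n−√n−2)/2, with b₀, b₁, b₂ as in the limiting linearization (b₂ < 0, b₁ = p b₂, b₀ = −((n−4)/8)(4p²+8p−4np−5n+4+n²)). If the quadratic f₀(γ) = b₀ − b₁γ + b₂γ² has two distinct real roots γ₀⁻ < γ₀⁺, then 0 < γ₀⁻ < p/2 < γ₀⁺; if the roots are complex conjugates, their common real part equals p/2. -/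
set_option maxHeartbeats 1000000


/-- Structure of the indicial roots `γ₀^±` of the `j = 0` mode: two distinct
real roots of `f₀(γ) = b₀ - b₁γ + b₂γ²` satisfy `0 < γ₀⁻ < p/2 < γ₀⁺`, while
complex conjugate roots have real part `p/2`. -/
theorem indicial_roots_j_zero (n : ℕ) (hn : 5 ≤ n) (p : ℝ) (hp0 : 0 < p)
    (hp1 : p < ((n : ℝ) - Real.sqrt n - 2) / 2)
    (b₀ b₁ b₂ : ℝ)
    (hb₂ : b₂ = -((n : ℝ) - 4) * ((n : ℝ) - 2 * p - 1) / 8)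
    (hb₁ : b₁ = p * b₂)
    (hb₀ : b₀ = -(((n : ℝ) - 4) / 8) *
        (4 * p ^ 2 + 8 * p - 4 * (n : ℝ) * p - 5 * (n : ℝ) + 4 + (n : ℝ) ^ 2)) :
    (∀ γm γp : ℝ, γm < γp →
        b₀ - b₁ * γm + b₂ * γm ^ 2 = 0 → b₀ - b₁ * γp + b₂ * γp ^ 2 = 0 →
        0 < γm ∧ γm < p / 2 ∧ p / 2 < γp) ∧
    (b₁ ^ 2 - 4 * b₂ * b₀ < 0 →
      ∀ z : ℂ, (b₀ : ℂ) - (b₁ : ℂ) * z + (b₂ : ℂ) * z ^ 2 = 0 → z.re = p / 2) := by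
  have hn5 : (5 : ℝ) ≤ (n : ℝ) := by exact_mod_cast hn
  have hs0 : 0 ≤ Real.sqrt n := Real.sqrt_nonneg _
  have hsq : Real.sqrt n ^ 2 = (n : ℝ) := Real.sq_sqrt (by positivity)
  have h1 : Real.sqrt n < (n : ℝ) - 2 * p - 2 := by linarith
  have hQ : (n : ℝ) < ((n : ℝ) - 2 * p - 2) ^ 2 := by nlinarith
  have hb2neg : b₂ < 0 := by rw [hb₂]; nlinarith
  have hb0neg : b₀ < 0 := by rw [hb₀]; nlinarith
  have hb2ne : b₂ ≠ 0 := ne_of_lt hb2neg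
  constructor
  · intro γm γp hlt h1' h2'
    have key : (γp - γm) * (b₂ * (γp + γm) - b₁) = 0 := by linear_combination h2' - h1'
    have hne : γp - γm ≠ 0 := sub_ne_zero.mpr (ne_of_gt hlt)
    have hsum : γm + γp = p := by
      rcases mul_eq_zero.mp key with h | h
      · exact absurd h hne
      · have : b₂ * (γp + γm) = b₂ * p := by rw [hb₁] at h; linarith [h]; 
        have := mul_left_cancel₀ hb2ne this
        linarith
    have hm : γm < p / 2 := by linarith
    have hp2 : p / 2 < γp := by linarith
    have hprod : b₂ * (γm * γp) = b₀ := by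
      linear_combination -h1' + b₂ * γm * hsum - γm * hb₁
    have hpos : 0 < γm * γp := by nlinarith
    have hγp : 0 < γp := by linarith
    have : 0 < γm := by
      by_contra h
      push_neg at h
      nlinarith
    exact ⟨this, hm, hp2⟩
  · intro hdisc z hz
    have hb1c : (b₁ : ℂ) = (p : ℂ) * (b₂ : ℂ) := by push_cast [hb₁]; ring
    have hw : (b₂ : ℂ) * ((z - ((p / 2 : ℝ) : ℂ)) * (z - ((p / 2 : ℝ) : ℂ)))
        = ((b₂ * p ^ 2 / 4 - b₀ : ℝ) : ℂ) := by
      push_cast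
      linear_combination hz + z * hb1c
    have hre := congrArg Complex.re hw
    have him := congrArg Complex.im hw
    simp only [Complex.mul_re, Complex.mul_im, Complex.sub_re, Complex.sub_im,
      Complex.ofReal_re, Complex.ofReal_im, mul_zero, zero_mul, sub_zero,
      zero_sub, add_zero, zero_add, neg_zero] at hre him
    set a : ℝ := z.re - p / 2 with ha
    set b : ℝ := z.im with hb
    have h2 : a * b + b * a = 0 := by
      rcases mul_eq_zero.mp him with h | h
      · exact absurd h hb2ne
      · exact h
    have hab : a * b = 0 := by linarith
    rcases mul_eq_zero.mp hab with h | h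
    · have hz0 : z.re - p / 2 = 0 := ha ▸ h
      linarith
    · exfalso
      rw [hb₁] at hdisc
      rw [h] at hre
      have key : 4 * b₂ ^ 2 * (a * a) = b₂ ^ 2 * p ^ 2 - 4 * b₂ * b₀ := by
        linear_combination (4 * b₂) * hre
      nlinarith [key, hdisc, sq_nonneg (b₂ * a)]
end
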